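/- Let 0 < a < s ≤ 1 and C ≥ 0, and let f : ℝ → ℝ satisfy |f(x) − f(y)| ≤ C|x−y|^s for all x, y ∈ ℝ and f(x) = 0 for all x ≤ 0. Define g : ℝ → ℝ by g(x) = f(x)/x^a for x > 0 and g(x) = 0 for x ≤ 0. Then there is a constant C' ≥ 0, depending only on C, a, s, such that |g(x) − g(y)| ≤ C'|x−y|^{s−a} for all x, y ∈ ℝ. -/

import Mathlib

open Set Real

lemma aux_rpow_concave {a x y : ℝ} (ha : 0 < a) (ha1 : a ≤ 1) (hy : 0 < y) (hxy : y ≤ x) :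
    x ^ a - y ^ a ≤ a * y ^ (a - 1) * (x - y) := by
  have ht : (0:ℝ) ≤ (x - y) / y := div_nonneg (by linarith) hy.le
  have hb := rpow_one_add_le_one_add_mul_self (s := (x - y)/y) (by linarith) ha.le ha1
  have hx' : x = y * (1 + (x - y)/y) := by field_simp; ring
  have h1 : x ^ a = y ^ a * (1 + (x - y)/y) ^ a := by
    rw [← Real.mul_rpow hy.le (by linarith), ← hx']
  have h2 : y ^ a * (1 + (x - y)/y) ^ a ≤ y ^ a * (1 + a * ((x - y)/y)) :=
    mul_le_mul_of_nonneg_left hb (Real.rpow_nonneg hy.le a)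
  have h3 : y ^ a * (1 + a * ((x - y)/y)) = y ^ a + a * y ^ (a - 1) * (x - y) := by
    have hy1 : y ^ (a - 1) = y ^ a / y := by rw [Real.rpow_sub hy, Real.rpow_one]
    rw [hy1]; ring
  nlinarith [h1, h2, h3]

theorem holder_div_power (a s C : ℝ) (ha : 0 < a) (has : a < s) (hs1 : s ≤ 1) (hC : 0 ≤ C) :
    ∃ C' : ℝ, 0 ≤ C' ∧ ∀ f : ℝ → ℝ,
      (∀ x y : ℝ, |f x - f y| ≤ C * |x - y| ^ s) →
      (∀ x : ℝ, x ≤ 0 → f x = 0) →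
      ∀ x y : ℝ,
        |(if 0 < x then f x / x ^ a else 0) - (if 0 < y then f y / y ^ a else 0)|
          ≤ C' * |x - y| ^ (s - a) := by
  refine ⟨3 * C, by linarith, fun f hf hf0 => ?_⟩
  have hsa : 0 < s - a := by linarith
  have ha1 : a ≤ 1 := by linarith
  have hfb : ∀ x : ℝ, 0 < x → |f x| ≤ C * x ^ s := by
    intro x hx
    have := hf x 0
    rw [hf0 0 le_rfl, sub_zero, sub_zero, abs_of_pos hx] at this
    exact this
  have hgb : ∀ x : ℝ, 0 < x → |f x / x ^ a| ≤ C * x ^ (s - a) := by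
    intro x hx
    have hxa : (0:ℝ) < x ^ a := Real.rpow_pos_of_pos hx a
    rw [abs_div, abs_of_pos hxa, div_le_iff₀ hxa]
    calc |f x| ≤ C * x ^ s := hfb x hx
      _ = C * x ^ (s - a) * x ^ a := by
          rw [mul_assoc, ← Real.rpow_add hx]; ring_nf
  -- main estimate for 0 < y ≤ x
  have key : ∀ x y : ℝ, 0 < y → y ≤ x →
      |f x / x ^ a - f y / y ^ a| ≤ 3 * C * (x - y) ^ (s - a) := by
    intro x y hy hxy
    rcases eq_or_lt_of_le hxy with rfl | hlt
    · simp [Real.zero_rpow hsa.ne']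
    have hx : 0 < x := hy.trans hlt
    set h := x - y with hh
    have hh0 : 0 < h := by simp only [hh]; linarith
    have hxa : (0:ℝ) < x ^ a := Real.rpow_pos_of_pos hx a
    have hya : (0:ℝ) < y ^ a := Real.rpow_pos_of_pos hy a
    have hyx : y ^ a ≤ x ^ a := Real.rpow_le_rpow hy.le hxy ha.le
    have hhsa : (0:ℝ) < h ^ (s - a) := Real.rpow_pos_of_pos hh0 _
    rcases le_or_gt y h with hyh | hhy
    · -- y ≤ h: crude bound via |g x| + |g y|
      have b1 : |f x / x ^ a| ≤ C * x ^ (s - a) := hgb x hx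
      have b2 : |f y / y ^ a| ≤ C * y ^ (s - a) := hgb y hy
      have hx2h : x ≤ 2 * h := by simp only [hh] at *; linarith
      have e1 : x ^ (s - a) ≤ (2 * h) ^ (s - a) :=
        Real.rpow_le_rpow hx.le hx2h hsa.le
      have e2 : (2 * h) ^ (s - a) ≤ 2 * h ^ (s - a) := by
        rw [Real.mul_rpow (by norm_num) hh0.le]
        have h21 : (2:ℝ) ^ (s - a) ≤ 2 ^ (1:ℝ) :=
          Real.rpow_le_rpow_of_exponent_le (by norm_num) (by linarith)
        rw [Real.rpow_one] at h21
        exact mul_le_mul_of_nonneg_right h21 (Real.rpow_nonneg hh0.le _)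
      have e3 : y ^ (s - a) ≤ h ^ (s - a) := Real.rpow_le_rpow hy.le hyh hsa.le
      calc |f x / x ^ a - f y / y ^ a| ≤ |f x / x ^ a| + |f y / y ^ a| := abs_sub _ _
        _ ≤ C * (2 * h ^ (s - a)) + C * h ^ (s - a) := by nlinarith [e1.trans e2]
        _ = 3 * C * h ^ (s - a) := by ring
    · -- h < y: split g x - g y
      have hsplit : f x / x ^ a - f y / y ^ a
          = (f x - f y) / x ^ a + f y * (y ^ a - x ^ a) / (x ^ a * y ^ a) := by
        field_simp; ring
      have t1 : |(f x - f y) / x ^ a| ≤ C * h ^ (s - a) := by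
        rw [abs_div, abs_of_pos hxa, div_le_iff₀ hxa]
        have hxh : h ≤ x := by simp only [hh] at *; linarith
        have e : h ^ a ≤ x ^ a := Real.rpow_le_rpow hh0.le hxh ha.le
        calc |f x - f y| ≤ C * |x - y| ^ s := hf x y
          _ = C * h ^ s := by rw [← hh, abs_of_pos hh0]
          _ = C * h ^ (s - a) * h ^ a := by
              rw [mul_assoc, ← Real.rpow_add hh0]; ring_nf
          _ ≤ C * h ^ (s - a) * x ^ a :=
              mul_le_mul_of_nonneg_left e (by positivity)
      have t2 : |f y * (y ^ a - x ^ a) / (x ^ a * y ^ a)| ≤ C * a * h ^ (s - a) := by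
        rw [abs_div, abs_mul, abs_of_pos (mul_pos hxa hya), div_le_iff₀ (mul_pos hxa hya)]
        have habs : |y ^ a - x ^ a| = x ^ a - y ^ a := by
          rw [abs_sub_comm, abs_of_nonneg]; linarith
        rw [habs]
        have hcon : x ^ a - y ^ a ≤ a * y ^ (a - 1) * h :=
          aux_rpow_concave ha ha1 hy hxy
        have hfy : |f y| ≤ C * y ^ s := hfb y hy
        have hA : |f y| * (x ^ a - y ^ a) ≤ (C * y ^ s) * (a * y ^ (a - 1) * h) :=
          mul_le_mul hfy hcon (by linarith) (by positivity)
        refine hA.trans ?_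
        have hid : (C * y ^ s) * (a * y ^ (a - 1) * h)
            = C * a * (y ^ (s - a - 1) * h) * (y ^ a * y ^ a) := by
          rw [show s = (s - a - 1) + (a + (a + (1 - a))) by ring]
          rw [Real.rpow_add hy, Real.rpow_add hy, Real.rpow_add hy]
          rw [show (1:ℝ) - a = -(a - 1) by ring, Real.rpow_neg hy.le]
          have hya1 : y ^ (a - 1) ≠ 0 := (Real.rpow_pos_of_pos hy _).ne'
          field_simp
          ring
        rw [hid]
        have h1 : y ^ (s - a - 1) * h ≤ h ^ (s - a) := by
          have e1 : y ^ (s - a - 1) ≤ h ^ (s - a - 1) :=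
            Real.rpow_le_rpow_of_nonpos hh0 hhy.le (by linarith)
          calc y ^ (s - a - 1) * h ≤ h ^ (s - a - 1) * h :=
                mul_le_mul_of_nonneg_right e1 hh0.le
            _ = h ^ (s - a - 1) * h ^ (1:ℝ) := by rw [Real.rpow_one]
            _ = h ^ (s - a) := by rw [← Real.rpow_add hh0]; ring_nf
        have hCa : (0:ℝ) ≤ C * a := by positivity
        calc C * a * (y ^ (s - a - 1) * h) * (y ^ a * y ^ a)
            ≤ C * a * h ^ (s - a) * (y ^ a * y ^ a) :=
              mul_le_mul_of_nonneg_right (mul_le_mul_of_nonneg_left h1 hCa) (by positivity)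
          _ ≤ C * a * h ^ (s - a) * (x ^ a * y ^ a) :=
              mul_le_mul_of_nonneg_left (mul_le_mul_of_nonneg_right hyx hya.le) (by positivity)
      calc |f x / x ^ a - f y / y ^ a|
          ≤ |(f x - f y) / x ^ a| + |f y * (y ^ a - x ^ a) / (x ^ a * y ^ a)| := by
            rw [hsplit]; exact abs_add_le _ _
        _ ≤ C * h ^ (s - a) + C * a * h ^ (s - a) := add_le_add t1 t2
        _ ≤ 3 * C * h ^ (s - a) := by
            nlinarith [mul_nonneg (mul_nonneg hC (by linarith : (0:ℝ) ≤ 2 - a)) hhsa.le]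
  -- now the general case
  intro x y
  by_cases hx : 0 < x <;> by_cases hy : 0 < y
  · simp only [if_pos hx, if_pos hy]
    rcases le_total y x with hxy | hxy
    · rw [abs_of_nonneg (by linarith : (0:ℝ) ≤ x - y)]
      exact key x y hy hxy
    · rw [abs_sub_comm, abs_sub_comm x y, abs_of_nonneg (by linarith : (0:ℝ) ≤ y - x)]
      exact key y x hx hxy
  · -- x > 0, y ≤ 0
    simp only [if_pos hx, if_neg hy, sub_zero]
    push_neg at hy
    have hxy : x ≤ x - y := by linarith
    have : |f x / x ^ a| ≤ C * x ^ (s - a) := hgb x hx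
    have e : x ^ (s - a) ≤ |x - y| ^ (s - a) := by
      rw [abs_of_pos (by linarith : (0:ℝ) < x - y)]
      exact Real.rpow_le_rpow hx.le hxy hsa.le
    nlinarith [Real.rpow_nonneg (abs_nonneg (x - y)) (s - a), abs_nonneg (f x / x ^ a)]
  · -- x ≤ 0, y > 0
    simp only [if_neg hx, if_pos hy, zero_sub, abs_neg]
    push_neg at hx
    have hxy : y ≤ y - x := by linarith
    have : |f y / y ^ a| ≤ C * y ^ (s - a) := hgb y hy
    have e : y ^ (s - a) ≤ |x - y| ^ (s - a) := by
      rw [abs_sub_comm, abs_of_pos (by linarith : (0:ℝ) < y - x)]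
      exact Real.rpow_le_rpow hy.le hxy hsa.le
    nlinarith [Real.rpow_nonneg (abs_nonneg (x - y)) (s - a), abs_nonneg (f y / y ^ a)]
  · simp only [if_neg hx, if_neg hy, sub_zero, abs_zero]
    positivity
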